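/- Let G be a group of order pq² with p < q primes. Then G is capable (isomorphic to H/Z(H) for some group H) if and only if Z(G) is trivial. -/

import Mathlib

open Subgroup
open scoped commutatorElement
lemma myCommPow {H : Type*} [Group H] (h k : H) (hc : ⁅h, k⁆ ∈ Subgroup.center H) :
    ∀ n : ℕ, ⁅h ^ n, k⁆ = ⁅h, k⁆ ^ n := by
  intro n
  induction n with
  | zero => simp
  | succ n ih =>
    have e1 : ⁅h ^ (n+1), k⁆ = h * ⁅h ^ n, k⁆ * k * h⁻¹ * k⁻¹ := by
      simp only [commutatorElement_def]; group
    rw [e1, ih]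
    have hcn : h * ⁅h, k⁆ ^ n = ⁅h, k⁆ ^ n * h :=
      ((show Commute h ⁅h, k⁆ from Subgroup.mem_center_iff.mp hc h).pow_right n).eq
    calc h * ⁅h, k⁆ ^ n * k * h⁻¹ * k⁻¹
        = ⁅h, k⁆ ^ n * h * k * h⁻¹ * k⁻¹ := by rw [hcn]
      _ = ⁅h, k⁆ ^ n * ⁅h, k⁆ := by simp only [commutatorElement_def]; group
      _ = ⁅h, k⁆ ^ (n+1) := by rw [pow_succ]

lemma map_center_eq {G G' : Type*} [Group G] [Group G'] (e : G ≃* G') :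
    (Subgroup.center G).map e.toMonoidHom = Subgroup.center G' := by
  ext y
  simp only [Subgroup.mem_map]
  constructor
  · rintro ⟨x, hx, rfl⟩
    rw [Subgroup.mem_center_iff]
    intro g
    have h1 := Subgroup.mem_center_iff.mp hx (e.symm g)
    show g * e x = e x * g
    calc g * e x = e (e.symm g * x) := by simp
    _ = e (x * e.symm g) := by rw [h1]
    _ = e x * g := by simp
  · intro hy
    refine ⟨e.symm y, ?_, by simp⟩
    rw [Subgroup.mem_center_iff]
    intro g
    have h1 := Subgroup.mem_center_iff.mp hy (e g)
    apply e.injective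
    calc e (g * e.symm y) = e g * y := by simp
    _ = y * e g := h1
    _ = e (e.symm y * g) := by simp

lemma factq {p q : ℕ} (hp : p.Prime) (hq : q.Prime) (hne : p ≠ q) :
    (p * q ^ 2).factorization q = 2 := by
  rw [Nat.factorization_mul hp.ne_zero (pow_ne_zero 2 hq.ne_zero)]
  simp [hp.factorization, hq.factorization_pow, Finsupp.single_apply, hne]
lemma Kp {G : Type*} [Group G] {p q : ℕ} (hp : p.Prime) (hq : q.Prime) (hpq : p < q)
    (hcard : Nat.card G = p * q ^ 2) (z : G) (hzp : orderOf z = p)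
    (K : Subgroup G) (hzK : z ∈ K)
    (hcop : ∀ g : G, Nat.Coprime p (orderOf g) → g ∈ K) : K = ⊤ := by
  haveI : Fact p.Prime := ⟨hp⟩
  haveI : Fact q.Prime := ⟨hq⟩
  have hfin : Finite G := Nat.finite_of_card_ne_zero (by
    rw [hcard]; exact Nat.mul_ne_zero hp.ne_zero (pow_ne_zero 2 hq.ne_zero))
  have hcopPQ : Nat.Coprime p (q ^ 2) :=
    Nat.Coprime.pow_right 2 ((Nat.coprime_primes hp hq).mpr hpq.ne)
  obtain ⟨Q⟩ : Nonempty (Sylow q G) := Sylow.nonempty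
  have hQcard : Nat.card Q = q ^ 2 := by
    rw [Sylow.card_eq_multiplicity, hcard, factq hp hq hpq.ne]
  have hQK : (Q : Subgroup G) ≤ K := by
    intro x hx
    apply hcop
    have hdvd : orderOf x ∣ q ^ 2 := by
      rw [← hQcard, ← Subgroup.orderOf_mk x hx]
      exact orderOf_dvd_natCard _
    exact Nat.Coprime.coprime_dvd_right hdvd hcopPQ
  have h1 : q ^ 2 ∣ Nat.card K := hQcard ▸ Subgroup.card_dvd_of_le hQK
  have h2 : p ∣ Nat.card K := by
    rw [← hzp, ← Subgroup.orderOf_mk z hzK]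
    exact orderOf_dvd_natCard _
  have h3 : p * q ^ 2 ∣ Nat.card K := hcopPQ.mul_dvd_of_dvd_of_dvd h2 h1
  apply Subgroup.eq_top_of_card_eq
  exact Nat.dvd_antisymm (hcard ▸ Subgroup.card_subgroup_dvd_card K) (hcard ▸ h3)
lemma Kq {G : Type*} [Group G] {p q : ℕ} (hp : p.Prime) (hq : q.Prime) (hpq : p < q)
    (hcard : Nat.card G = p * q ^ 2) (z : G) (hz : z ∈ Subgroup.center G)
    (hzq : orderOf z = q) (hZq : Nat.card (Subgroup.center G) = q)
    (K : Subgroup G) (hzK : z ∈ K) (hcomm : commutator G ≤ K)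
    (hcop : ∀ g : G, Nat.Coprime q (orderOf g) → g ∈ K) : K = ⊤ := by
  haveI : Fact p.Prime := ⟨hp⟩
  haveI : Fact q.Prime := ⟨hq⟩
  have hfin : Finite G := Nat.finite_of_card_ne_zero (by
    rw [hcard]; exact Nat.mul_ne_zero hp.ne_zero (pow_ne_zero 2 hq.ne_zero))
  have hcoppq : Nat.Coprime p q := (Nat.coprime_primes hp hq).mpr hpq.ne
  -- an element of order p
  obtain ⟨t, ht⟩ := exists_prime_orderOf_dvd_card' (G := G) p
    (by rw [hcard]; exact Dvd.intro _ rfl)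
  have htK : t ∈ K := hcop t (by rw [ht]; exact hcoppq.symm)
  -- Sylow q-subgroup
  obtain ⟨Q⟩ : Nonempty (Sylow q G) := Sylow.nonempty
  have hQcard : Nat.card Q = q ^ 2 := by
    rw [Sylow.card_eq_multiplicity, hcard, factq hp hq hpq.ne]
  -- index of Q is p
  have hQindex : (Q : Subgroup G).index = p := by
    have := Subgroup.card_mul_index (Q : Subgroup G)
    rw [hQcard, hcard] at this
    have hq2 : 0 < q ^ 2 := pow_pos hq.pos 2
    exact Nat.eq_of_mul_eq_mul_left hq2 (by rw [this]; ring)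
  -- number of Sylow q-subgroups is 1
  have hnum : Nat.card (Sylow q G) = 1 := by
    have hdvd : Nat.card (Sylow q G) ∣ p := hQindex ▸ Sylow.card_dvd_index Q
    rcases (Nat.Prime.eq_one_or_self_of_dvd hp _ hdvd) with h | h
    · exact h
    · exfalso
      have hmod := card_sylow_modEq_one q G
      rw [h] at hmod
      have : p % q = 1 % q := hmod
      rw [Nat.mod_eq_of_lt hpq, Nat.mod_eq_of_lt (hq.one_lt)] at this
      exact (Nat.Prime.one_lt hp).ne' this
  haveI hsub : Subsingleton (Sylow q G) :=
    (Nat.card_eq_one_iff_unique.mp hnum).1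
  -- Q is normal
  have hQn : (Q : Subgroup G).Normal := by
    rw [← Subgroup.normalizer_eq_top_iff]
    rw [← Subgroup.index_eq_one]; exact (Sylow.card_eq_index_normalizer Q).symm.trans hnum
  haveI := hQn
  -- z lies in Q
  have hzQ : z ∈ (Q : Subgroup G) := by
    have hpg : IsPGroup q (Subgroup.zpowers z) := by
      apply IsPGroup.of_card
      rw [Nat.card_zpowers, hzq, pow_one]
    obtain ⟨P, hP⟩ := hpg.exists_le_sylow
    have : P = Q := Subsingleton.elim _ _
    exact this ▸ hP (Subgroup.mem_zpowers z)
  -- commutator G ≤ Q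
  have hcomQ : commutator G ≤ (Q : Subgroup G) := by
    have hcyc : IsCyclic (G ⧸ (Q : Subgroup G)) := by
      apply isCyclic_of_prime_card (p := p)
      rw [← Subgroup.index_eq_card, hQindex]
    letI : CommGroup (G ⧸ (Q : Subgroup G)) := hcyc.commGroup
    have := Abelianization.commutator_subset_ker (QuotientGroup.mk' (Q : Subgroup G))
    rwa [QuotientGroup.ker_mk'] at this
  -- the subgroup M
  set M : Subgroup G := commutator G ⊔ Subgroup.zpowers z with hM
  have hMQ : M ≤ (Q : Subgroup G) := sup_le hcomQ (Subgroup.zpowers_le.mpr hzQ)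
  have hqM : q ∣ Nat.card M := by
    have : Subgroup.zpowers z ≤ M := le_sup_right
    have h1 := Subgroup.card_dvd_of_le this
    rwa [Nat.card_zpowers, hzq] at h1
  have hMdvd : Nat.card M ∣ q ^ 2 := hQcard ▸ Subgroup.card_dvd_of_le hMQ
  obtain ⟨i, hi, hMi⟩ := (Nat.dvd_prime_pow hq).mp hMdvd
  have hi1 : 1 ≤ i := by
    by_contra hcon
    interval_cases i
    · rw [hMi, pow_zero] at hqM
      exact hq.one_lt.ne' (Nat.eq_one_of_dvd_one hqM)
  interval_cases i
  · -- card M = q : M = zpowers z ≤ center, contradiction via t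
    exfalso
    rw [pow_one] at hMi
    have hzpM : Subgroup.zpowers z = M :=
      Subgroup.eq_of_le_of_card_ge le_sup_right (by rw [hMi, Nat.card_zpowers, hzq])
    have hcomc : commutator G ≤ Subgroup.center G :=
      calc commutator G ≤ M := le_sup_left
        _ = Subgroup.zpowers z := hzpM.symm
        _ ≤ Subgroup.center G := Subgroup.zpowers_le.mpr hz
    have htc : ∀ x : G, ⁅t, x⁆ = 1 := by
      intro x
      have hcen : ⁅t, x⁆ ∈ Subgroup.center G :=
        hcomc (Subgroup.commutator_mem_commutator (Subgroup.mem_top t) (Subgroup.mem_top x))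
      have hp1 : ⁅t, x⁆ ^ p = 1 := by
        rw [← myCommPow t x hcen p, ← ht, pow_orderOf_eq_one]
        exact commutatorElement_one_left x
      have hdq : orderOf ⁅t, x⁆ ∣ q := by
        rw [← hZq, ← Subgroup.orderOf_mk _ hcen]
        exact orderOf_dvd_natCard _
      have hdp : orderOf ⁅t, x⁆ ∣ p := orderOf_dvd_of_pow_eq_one hp1
      exact orderOf_eq_one_iff.mp (Nat.dvd_one.mp (hcoppq ▸ Nat.dvd_gcd hdp hdq))
    have htcen : t ∈ Subgroup.center G :=
      Subgroup.mem_center_iff.mpr (fun g => (commutatorElement_eq_one_iff_mul_comm.mp (htc g)).symm)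
    have hdvd : p ∣ q := by
      rw [← ht, ← hZq, ← Subgroup.orderOf_mk t htcen]
      exact orderOf_dvd_natCard _
    exact hpq.ne ((Nat.prime_dvd_prime_iff_eq hp hq).mp hdvd)
  · -- card M = q ^ 2 : M = Q
    have hMeqQ : M = (Q : Subgroup G) :=
      Subgroup.eq_of_le_of_card_ge hMQ (by rw [hMi, hQcard])
    have hQK : (Q : Subgroup G) ≤ K := hMeqQ ▸ sup_le hcomm (Subgroup.zpowers_le.mpr hzK)
    have h1 : q ^ 2 ∣ Nat.card K := hQcard ▸ Subgroup.card_dvd_of_le hQK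
    have h2 : p ∣ Nat.card K := by
      rw [← ht, ← Subgroup.orderOf_mk t htK]
      exact orderOf_dvd_natCard _
    have h3 : p * q ^ 2 ∣ Nat.card K :=
      (hcoppq.pow_right 2).mul_dvd_of_dvd_of_dvd h2 h1
    apply Subgroup.eq_top_of_card_eq
    exact Nat.dvd_antisymm (hcard ▸ Subgroup.card_subgroup_dvd_card K) (hcard ▸ h3)
lemma center_quot_eq_bot {p q : ℕ} (hp : p.Prime) (hq : q.Prime) (hpq : p < q)
    (H : Type*) [Group H]
    (hcard : Nat.card (H ⧸ Subgroup.center H) = p * q ^ 2) :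
    Subgroup.center (H ⧸ Subgroup.center H) = ⊥ := by
  haveI : Fact p.Prime := ⟨hp⟩
  haveI : Fact q.Prime := ⟨hq⟩
  set G := H ⧸ Subgroup.center H with hG
  by_contra hne
  have hfin : Finite G := Nat.finite_of_card_ne_zero (by
    rw [hcard]; exact Nat.mul_ne_zero hp.ne_zero (pow_ne_zero 2 hq.ne_zero))
  have hcoppq : Nat.Coprime p q := (Nat.coprime_primes hp hq).mpr hpq.ne
  -- find a suitable central element z
  have hzex : ∃ z : G, z ∈ Subgroup.center G ∧ z ≠ 1 ∧
      (orderOf z = p ∨ (orderOf z = q ∧ Nat.card (Subgroup.center G) = q)) := by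
    by_cases hpd : p ∣ Nat.card (Subgroup.center G)
    · obtain ⟨zc, hzc⟩ := exists_prime_orderOf_dvd_card' (G := Subgroup.center G) p hpd
      refine ⟨(zc : G), zc.2, ?_, Or.inl ?_⟩
      · intro h1
        have : orderOf (zc : G) = 1 := by rw [h1, orderOf_one]
        rw [Subgroup.orderOf_coe, hzc] at this
        exact hp.one_lt.ne' this
      · rw [Subgroup.orderOf_coe, hzc]
    · -- card center divides q ^ 2
      have hdvd : Nat.card (Subgroup.center G) ∣ p * q ^ 2 :=
        hcard ▸ Subgroup.card_subgroup_dvd_card _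
      have hdq2 : Nat.card (Subgroup.center G) ∣ q ^ 2 := by
        have hcop2 : Nat.Coprime (Nat.card (Subgroup.center G)) p :=
          ((hp.coprime_iff_not_dvd).mpr hpd).symm
        exact hcop2.dvd_of_dvd_mul_left hdvd
      obtain ⟨i, hi, hci⟩ := (Nat.dvd_prime_pow hq).mp hdq2
      have hine : i ≠ 0 := by
        intro h0
        rw [h0, pow_zero] at hci
        exact hne (Subgroup.card_eq_one.mp hci)
      have hine2 : i ≠ 2 := by
        intro h2
        rw [h2] at hci
        -- then G ⧸ center G has order p, so G is abelian, so center = G, contradiction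
        have hq2 : Nat.card (G ⧸ Subgroup.center G) = p := by
          have hh := Subgroup.card_eq_card_quotient_mul_card_subgroup (Subgroup.center G)
          rw [hcard, hci] at hh
          have : 0 < q ^ 2 := pow_pos hq.pos 2
          exact Nat.eq_of_mul_eq_mul_right this hh.symm
        haveI : IsCyclic (G ⧸ Subgroup.center G) := isCyclic_of_prime_card hq2
        have hab : ∀ a b : G, a * b = b * a :=
          commutative_of_cyclic_center_quotient (QuotientGroup.mk' (Subgroup.center G))
            (by rw [QuotientGroup.ker_mk'])
        have : Subgroup.center G = ⊤ := by
          rw [Subgroup.eq_top_iff']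
          intro g
          exact Subgroup.mem_center_iff.mpr (fun b => hab b g)
        apply hpd
        rw [this]
        rw [Subgroup.card_top, hcard]
        exact Dvd.intro _ rfl
      have hi1 : i = 1 := by omega
      rw [hi1, pow_one] at hci
      obtain ⟨zc, hzc⟩ := exists_prime_orderOf_dvd_card' (G := Subgroup.center G) q
        (by rw [hci])
      refine ⟨(zc : G), zc.2, ?_, Or.inr ⟨?_, hci⟩⟩
      · intro h1
        have : orderOf (zc : G) = 1 := by rw [h1, orderOf_one]
        rw [Subgroup.orderOf_coe, hzc] at this
        exact hq.one_lt.ne' this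
      · rw [Subgroup.orderOf_coe, hzc]
  obtain ⟨z, hzc, hz1, horder⟩ := hzex
  -- lift z to H
  obtain ⟨h, rfl⟩ := QuotientGroup.mk_surjective z
  -- all commutators with h are central in H
  have hmemc : ∀ k : H, ⁅h, k⁆ ∈ Subgroup.center H := by
    intro k
    rw [← QuotientGroup.eq_one_iff]
    have : ((⁅h, k⁆ : H) : G) = ⁅(h : G), (k : G)⁆ :=
      map_commutatorElement (QuotientGroup.mk' (Subgroup.center H)) h k
    rw [this, commutatorElement_eq_one_iff_mul_comm]
    exact (Subgroup.mem_center_iff.mp hzc (k : G)).symm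
  -- the homomorphism φ : H →* center H
  have hmul : ∀ k₁ k₂ : H, ⁅h, k₁ * k₂⁆ = ⁅h, k₁⁆ * ⁅h, k₂⁆ := by
    intro k₁ k₂
    have key : ⁅h, k₁ * k₂⁆ = ⁅h, k₁⁆ * (k₁ * ⁅h, k₂⁆ * k₁⁻¹) := by
      simp only [commutatorElement_def]; group
    rw [key, Subgroup.mem_center_iff.mp (hmemc k₂) k₁]
    group
  set φ : H →* Subgroup.center H :=
    { toFun := fun k => ⟨⁅h, k⁆, hmemc k⟩
      map_one' := by
        ext; simp
      map_mul' := fun k₁ k₂ => Subtype.ext (by simpa using hmul k₁ k₂) } with hφ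
  have hker : ∀ x ∈ Subgroup.center H, φ x = 1 := by
    intro x hx
    apply Subtype.ext
    show ⁅h, x⁆ = 1
    rw [commutatorElement_eq_one_iff_mul_comm]
    exact (Subgroup.mem_center_iff.mp hx h)
  set ψ : G →* Subgroup.center H := QuotientGroup.lift (Subgroup.center H) φ hker with hψ
  have hψmk : ∀ k : H, ψ ((k : G)) = φ k := fun k => rfl
  set K : Subgroup G := ψ.ker with hK
  have hzK : (h : G) ∈ K := by
    rw [MonoidHom.mem_ker, hψmk]
    apply Subtype.ext
    show ⁅h, h⁆ = 1
    exact commutatorElement_self h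
  have hcop : ∀ g : G, Nat.Coprime (orderOf ((h : G))) (orderOf g) → g ∈ K := by
    intro g hcopg
    rw [MonoidHom.mem_ker, ← orderOf_eq_one_iff]
    have hd1 : orderOf (ψ g) ∣ orderOf g := orderOf_map_dvd ψ g
    have hd2 : orderOf (ψ g) ∣ orderOf ((h : G)) := by
      apply orderOf_dvd_of_pow_eq_one
      obtain ⟨k, rfl⟩ := QuotientGroup.mk_surjective g
      rw [hψmk]
      have hcent : h ^ orderOf ((h : G)) ∈ Subgroup.center H := by
        rw [← QuotientGroup.eq_one_iff]
        have : ((h ^ orderOf ((h : G)) : H) : G) = ((h : G)) ^ orderOf ((h : G)) :=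
          map_pow (QuotientGroup.mk' (Subgroup.center H)) h _
        rw [this]
        exact pow_orderOf_eq_one _
      apply Subtype.ext
      rw [SubgroupClass.coe_pow]
      show ⁅h, k⁆ ^ orderOf ((h : G)) = 1
      rw [← myCommPow h k (hmemc k)]
      exact commutatorElement_eq_one_iff_mul_comm.mpr (Subgroup.mem_center_iff.mp hcent k).symm
    exact Nat.dvd_one.mp (hcopg ▸ Nat.dvd_gcd hd2 hd1)
  have hcomm : commutator G ≤ K := by
    rw [_root_.commutator_def, Subgroup.commutator_le]
    intro g₁ _ g₂ _
    rw [MonoidHom.mem_ker, map_commutatorElement, commutatorElement_eq_one_iff_mul_comm]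
    exact Subtype.ext (Subgroup.mem_center_iff.mp (ψ g₂).2 (ψ g₁))
  -- K = ⊤
  have hKtop : K = ⊤ := by
    rcases horder with hop | ⟨hoq, hcq⟩
    · exact Kp hp hq hpq hcard _ hop K hzK (fun g hg => hcop g (hop ▸ hg))
    · exact Kq hp hq hpq hcard _ hzc hoq hcq K hzK hcomm (fun g hg => hcop g (hoq ▸ hg))
  -- so h is central, contradiction
  apply hz1
  rw [QuotientGroup.eq_one_iff]
  rw [Subgroup.mem_center_iff]
  intro g
  have : φ g = 1 := by
    rw [← hψmk g]
    have : (g : G) ∈ K := hKtop.symm ▸ Subgroup.mem_top _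
    exact MonoidHom.mem_ker.mp this
  have hcg : ⁅h, g⁆ = 1 := congrArg Subtype.val this
  exact (commutatorElement_eq_one_iff_mul_comm.mp hcg).symm
def AuxCarrier (n : ℕ) : Type := Fin n
def Capable (G : Type*) [Group G] : Prop :=
  ∃ (H : Type) (_ : Group H), Nonempty (G ≃* H ⧸ Subgroup.center H)
theorem capable_of_order_p_q_sq_iff_center_trivial
    (G : Type*) [Group G] (p q : ℕ)
    (hp : p.Prime) (hq : q.Prime) (hpq : p < q)
    (hcard : Nat.card G = p * q ^ 2) :
    Capable G ↔ Subgroup.center G = ⊥ := by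
  constructor
  · rintro ⟨H, _, ⟨e⟩⟩
    have h1 : Nat.card (H ⧸ Subgroup.center H) = p * q ^ 2 := by
      rw [← hcard]
      exact (Nat.card_congr e.toEquiv).symm
    have h2 := center_quot_eq_bot hp hq hpq H h1
    have h3 : (Subgroup.center G).map e.toMonoidHom = ⊥ := by
      rw [map_center_eq e, h2]
    exact (Subgroup.map_eq_bot_iff_of_injective _ e.injective).mp h3
  · intro hc
    have hne : Nat.card G ≠ 0 := by
      rw [hcard]; exact Nat.mul_ne_zero hp.ne_zero (pow_ne_zero 2 hq.ne_zero)
    obtain e : G ≃ AuxCarrier (Nat.card G) := Nat.equivFinOfCardPos hne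
    letI : Group (AuxCarrier (Nat.card G)) := e.symm.group
    let ι : AuxCarrier (Nat.card G) ≃* G := e.symm.mulEquiv
    have hcH : Subgroup.center (AuxCarrier (Nat.card G)) = ⊥ := by
      have h3 : (Subgroup.center (AuxCarrier (Nat.card G))).map ι.toMonoidHom = ⊥ := by
        rw [map_center_eq ι, hc]
      exact (Subgroup.map_eq_bot_iff_of_injective _ ι.injective).mp h3
    refine ⟨AuxCarrier (Nat.card G), inferInstance, ⟨?_⟩⟩
    exact ι.symm.trans ((QuotientGroup.quotientBot (G := AuxCarrier (Nat.card G))).symm.trans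
      (QuotientGroup.quotientMulEquivOfEq hcH.symm))
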